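/- For s ≥ 1 and m,n ≥ 0 with m > 0: ∂_{z,0}(A_m e_z (A_s + Ā_s) e_z A_n) = B_{m−1} e_z (A_s + Ā_s) e_z A_n − A_{s+m} e_z A_n − A_m e_z A_{s+n}; and for m = 0: ∂_{z,0}(e_z (A_s + Ā_s) e_z A_n) = −A_s e_z A_n − e_z A_{s+n}. -/

import Mathlib

open scoped BigOperators
open MeasureTheory Filter

noncomputable section

/-- Iterated integral over the open simplex `0 < t₁ < ⋯ < t_m < 1` of `∏ᵢ 1/(tᵢ - aᵢ)`. -/
def itInt (a : List ℂ) : ℂ :=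
  ∫ t in {t : Fin a.length → ℝ | StrictMono t ∧ ∀ i, t i ∈ Set.Ioo (0:ℝ) 1},
    ∏ i : Fin a.length, ((t i : ℂ) - a.get i)⁻¹

/-- Multiple zeta value attached to a list of exponents. -/
def mzv (k : List ℕ) : ℝ :=
  ∑' f : {f : Fin k.length → ℕ+ // StrictMono f},
    ∏ i : Fin k.length, (((f.1 i : ℕ) : ℝ) ^ (k.get i))⁻¹

/-- Letters: `0 ↦ e₀`, `1 ↦ e₁`, `2 ↦ e_z`. -/
abbrev Ltr := Fin 3

/-- The free noncommutative algebra `ℚ⟨e₀,e₁,e_z⟩` realized as a monoid algebra. -/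
abbrev Alg := MonoidAlgebra ℚ (FreeMonoid Ltr)

/-- The word (monomial) corresponding to a list of letters. -/
def wd (l : List Ltr) : Alg := MonoidAlgebra.of ℚ (FreeMonoid Ltr) (FreeMonoid.ofList l)

/-- Padded letter sequence: `a₀ = 0`, `a_{n+1} = 1`. -/
def pad (l : List Ltr) : ℕ → Ltr := fun i => (((0:Ltr) :: (l ++ [1])).getD i 0)

/-- Unordered-pair Kronecker delta. -/
def dl (a b c d : Ltr) : ℚ := if (a = c ∧ b = d) ∨ (a = d ∧ b = c) then 1 else 0

/-- `∂_{z,b}` on a single word. -/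
def delWord (b : Ltr) (l : List Ltr) : Alg :=
  ∑ i ∈ Finset.range l.length,
    (dl (pad l (i+1)) (pad l (i+2)) 2 b - dl (pad l i) (pad l (i+1)) 2 b) •
      wd (l.eraseIdx i)

/-- The linear operator `∂_{z,b}` on `ℚ⟨e₀,e₁,e_z⟩`. -/
def del (b : Ltr) : Alg →ₗ[ℚ] Alg :=
  Finsupp.lift Alg ℚ (FreeMonoid Ltr) (fun l => delWord b (FreeMonoid.toList l))
    ∘ₗ (MonoidAlgebra.coeffLinearEquiv ℚ).toLinearMap

/-- Evaluation of letters at a point `z`. -/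
def ev (z : ℂ) : Ltr → ℂ := fun i => if i = 0 then 0 else if i = 1 then 1 else z

/-- The linear map `L` (depending on `z`) given by iterated integrals. -/
def LL (z : ℂ) : Alg →ₗ[ℚ] ℂ :=
  Finsupp.lift ℂ ℚ (FreeMonoid Ltr) (fun l => itInt ((FreeMonoid.toList l).map (ev z)))
    ∘ₗ (MonoidAlgebra.coeffLinearEquiv ℚ).toLinearMap

/-- `A_n = (e₁e₀)^n`. -/
def Aw : ℕ → List Ltr
  | 0 => []
  | n+1 => 1 :: 0 :: Aw n

/-- `B_n = (e₁e₀)^n e₁`. -/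
def Bw (n : ℕ) : List Ltr := Aw n ++ [1]

/-- `Ā_n = (e₀e₁)^n`. -/
def Abar : ℕ → List Ltr
  | 0 => []
  | n+1 => 0 :: 1 :: Abar n

/-- `B̄_n = (e₀e₁)^n e₀`. -/
def Bbar (n : ℕ) : List Ltr := Abar n ++ [0]

/-- The single letter `e_z`. -/
def ezw : List Ltr := [2]

/-- Flip `e₀ ↔ e₁` (fixing `e_z`, which never occurs in duality words). -/
def flipL : Ltr → Ltr := fun i => if i = 0 then 1 else if i = 1 then 0 else 2

/-- The duality anti-automorphism `τ` as a linear map. -/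
def tau : Alg →ₗ[ℚ] Alg :=
  Finsupp.lift Alg ℚ (FreeMonoid Ltr)
    (fun l => ((-1 : ℚ) ^ (FreeMonoid.toList l).length) •
      wd (((FreeMonoid.toList l).reverse).map flipL))
    ∘ₗ (MonoidAlgebra.coeffLinearEquiv ℚ).toLinearMap

/-- `Δ(w) = w - τ(w)`. -/
def Del (x : Alg) : Alg := x - tau x

/-- The segment `[0,1] ⊂ ℂ`. -/
def seg : Set ℂ := (fun t : ℝ => (t : ℂ)) '' Set.Icc 0 1

/-- Admissibility of a word: it is empty, or starts with `e₁` or `e_z`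
and ends with `e₀` or `e_z`. -/
def adm (l : List Ltr) : Prop :=
  ∀ h : l ≠ [], (l.head h = 1 ∨ l.head h = 2) ∧ (l.getLast h = 0 ∨ l.getLast h = 2)

/-- The subspace `𝒜¹` spanned by admissible words. -/
def A1 : Submodule ℚ Alg := Submodule.span ℚ {x | ∃ l, adm l ∧ x = wd l}

/-- The span of words containing the letter `e_z` (the ideal `ℐ = 𝒜e_z𝒜`). -/
def Iz : Submodule ℚ Alg := Submodule.span ℚ {x | ∃ l : List Ltr, (2:Ltr) ∈ l ∧ x = wd l}

/-- `F_{ee}(m,n)`. -/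
def Fee (s : ℕ) (m n : ℤ) : Alg :=
  if m < 0 ∨ n < 0 then 0 else
  wd (Aw s ++ Bbar m.toNat ++ ezw ++ Aw n.toNat)
    + wd (Aw m.toNat ++ ezw ++ Aw s ++ ezw ++ Aw n.toNat)
    + wd (Aw m.toNat ++ ezw ++ Abar s ++ ezw ++ Aw n.toNat)
    + wd (Aw m.toNat ++ ezw ++ Bw n.toNat ++ Aw s)
    - wd (Bw (s + m.toNat) ++ ezw ++ Aw n.toNat)
    - wd (Aw m.toNat ++ ezw ++ Bbar (s + n.toNat))

/-- `F_{oe}(m,n)`. -/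
def Foe (s : ℕ) (m n : ℤ) : Alg :=
  if m < 0 ∨ n < 0 then 0 else
  wd (Aw s ++ Abar (m.toNat + 1) ++ ezw ++ Aw n.toNat)
    + wd (Bw m.toNat ++ ezw ++ Aw s ++ ezw ++ Aw n.toNat)
    + wd (Bw m.toNat ++ ezw ++ Abar s ++ ezw ++ Aw n.toNat)
    + wd (Bw m.toNat ++ ezw ++ Bw n.toNat ++ Aw s)
    - wd (Aw (s + m.toNat + 1) ++ ezw ++ Aw n.toNat)
    - wd (Bw m.toNat ++ ezw ++ Bbar (s + n.toNat))

/-- `F_{eo}(m,n)`. -/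
def Feo (s : ℕ) (m n : ℤ) : Alg :=
  if m < 0 ∨ n < 0 then 0 else
  wd (Aw s ++ Bbar m.toNat ++ ezw ++ Bbar n.toNat)
    + wd (Aw m.toNat ++ ezw ++ Aw s ++ ezw ++ Bbar n.toNat)
    + wd (Aw m.toNat ++ ezw ++ Abar s ++ ezw ++ Bbar n.toNat)
    + wd (Aw m.toNat ++ ezw ++ Abar (n.toNat + 1) ++ Aw s)
    - wd (Bw (s + m.toNat) ++ ezw ++ Bbar n.toNat)
    - wd (Aw m.toNat ++ ezw ++ Aw (s + n.toNat + 1))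

/-- `F_{oo}(m,n)`. -/
def Foo (s : ℕ) (m n : ℤ) : Alg :=
  if m < 0 ∨ n < 0 then 0 else
  wd (Aw s ++ Abar (m.toNat + 1) ++ ezw ++ Bbar n.toNat)
    + wd (Bw m.toNat ++ ezw ++ Aw s ++ ezw ++ Bbar n.toNat)
    + wd (Bw m.toNat ++ ezw ++ Abar s ++ ezw ++ Bbar n.toNat)
    + wd (Bw m.toNat ++ ezw ++ Abar (n.toNat + 1) ++ Aw s)
    - wd (Aw (s + m.toNat + 1) ++ ezw ++ Bbar n.toNat)
    - wd (Bw m.toNat ++ ezw ++ Aw (s + n.toNat + 1))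

lemma wd_append (a b : List Ltr) : wd (a ++ b) = wd a * wd b := by
  simp [wd, FreeMonoid.ofList_append, map_mul]

lemma del_wd (b : Ltr) (l : List Ltr) : del b (wd l) = delWord b l := by
  rw [del, wd, MonoidAlgebra.of_apply, LinearMap.comp_apply]; erw [Finsupp.lift_apply, Finsupp.sum_single_index] <;> simp

lemma dl_x1 (x : Ltr) : dl x 1 2 0 = 0 := by fin_cases x <;> simp [dl]

lemma dl_01 : dl 0 1 2 0 = 0 := by simp [dl]

lemma delWord_cons (x : Ltr) (l : List Ltr) :
    delWord 0 (x :: l) =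
      (dl x (pad l 1) 2 0 - dl 0 x 2 0) • wd l
        + wd [x] * delWord 0 l
        + (dl 0 (pad l 1) 2 0 - dl x (pad l 1) 2 0) • wd (x :: l.tail) := by
  have hmul : wd [x] * delWord 0 l
      = ∑ j ∈ Finset.range l.length,
          (dl (pad l (j+1)) (pad l (j+2)) 2 0 - dl (pad l j) (pad l (j+1)) 2 0) •
            wd (x :: l.eraseIdx j) := by
    rw [delWord, Finset.mul_sum]
    refine Finset.sum_congr rfl fun j _ => ?_
    rw [mul_smul_comm, ← wd_append]
    rfl
  have hterm : ∀ j, (dl (pad (x :: l) (j+1+1)) (pad (x :: l) (j+1+2)) 2 0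
        - dl (pad (x :: l) (j+1)) (pad (x :: l) (j+1+1)) 2 0) • wd ((x :: l).eraseIdx (j+1))
      = (dl (pad l (j+1)) (pad l (j+2)) 2 0 - dl (pad l j) (pad l (j+1)) 2 0) •
            wd (x :: l.eraseIdx j)
        + (if j = 0 then (dl 0 (pad l 1) 2 0 - dl x (pad l 1) 2 0) • wd (x :: l.tail) else 0) := by
    intro j
    cases j with
    | zero =>
        rw [if_pos rfl]
        have h1 : pad (x :: l) 1 = x := rfl
        have h2 : pad (x :: l) 2 = pad l 1 := rfl
        have h3 : pad (x :: l) 3 = pad l 2 := rfl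
        have h0 : pad l 0 = 0 := rfl
        have he : (x :: l).eraseIdx 1 = x :: l.eraseIdx 0 := rfl
        have he0 : l.eraseIdx 0 = l.tail := by cases l <;> rfl
        rw [he, he0, h0]
        show (dl (pad l 1) (pad l 2) 2 0 - dl x (pad l 1) 2 0) • wd (x :: l.tail) = _
        rw [← add_smul]
        congr 1
        ring
    | succ k =>
        rw [if_neg (Nat.succ_ne_zero k), add_zero]
        rfl
  rw [delWord, List.length_cons, Finset.sum_range_succ']
  simp only [hterm]
  rw [Finset.sum_add_distrib, ← hmul, Finset.sum_ite_eq' (Finset.range l.length) 0]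
  cases l with
  | nil =>
      simp [delWord, wd, dl_x1, dl_01, pad]
  | cons y t =>
      have : (0 : ℕ) ∈ Finset.range (y :: t).length := by simp
      rw [if_pos this]
      have h1 : pad ((x :: y :: t)) 1 = x := rfl
      have h2 : pad (x :: y :: t) 2 = pad (y :: t) 1 := rfl
      have h0 : pad (x :: y :: t) 0 = 0 := rfl
      have he : (x :: y :: t).eraseIdx 0 = y :: t := rfl
      rw [he, h0, h1, h2]
      abel

example : dl 0 1 2 0 = 0 := by decide
example : dl 2 0 2 0 = 1 := by decide
-- specialized cons rules
lemma cons01 (l : List Ltr) (h : pad l 1 = 1) :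
    delWord 0 (0 :: l) = wd [0] * delWord 0 l := by
  rw [delWord_cons, h]
  norm_num [show dl 0 1 2 0 = 0 by decide, show dl 0 0 2 0 = 0 by decide]

lemma cons10' (l : List Ltr) (h : pad l 1 = 0) :
    delWord 0 (1 :: l) = wd [1] * delWord 0 l := by
  rw [delWord_cons, h]
  norm_num [show dl 1 0 2 0 = 0 by decide, show dl 0 1 2 0 = 0 by decide,
    show dl 0 0 2 0 = 0 by decide]

lemma cons02 (l : List Ltr) (h : pad l 1 = 2) :
    delWord 0 (0 :: l) = wd l + wd [0] * delWord 0 l := by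
  rw [delWord_cons, h]
  norm_num [show dl 0 2 2 0 = 1 by decide, show dl 0 0 2 0 = 0 by decide]

lemma cons12 (l : List Ltr) (h : pad l 1 = 2) :
    delWord 0 (1 :: l) = wd [1] * delWord 0 l + wd (1 :: l.tail) := by
  rw [delWord_cons, h]
  norm_num [show dl 1 2 2 0 = 0 by decide, show dl 0 1 2 0 = 0 by decide,
    show dl 0 2 2 0 = 1 by decide]

lemma cons21 (l : List Ltr) (h : pad l 1 = 1) :
    delWord 0 (2 :: l) = -wd l + wd [2] * delWord 0 l := by
  rw [delWord_cons, h]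
  norm_num [show dl 2 1 2 0 = 0 by decide, show dl 0 2 2 0 = 1 by decide,
    show dl 0 1 2 0 = 0 by decide]

lemma cons20 (l : List Ltr) (h : pad l 1 = 0) :
    delWord 0 (2 :: l) = wd [2] * delWord 0 l - wd (2 :: l.tail) := by
  rw [delWord_cons, h]
  norm_num [show dl 2 0 2 0 = 1 by decide, show dl 0 2 2 0 = 1 by decide,
    show dl 0 0 2 0 = 0 by decide]
  abel

lemma wd_mul (a b : List Ltr) : wd a * wd b = wd (a ++ b) := (wd_append a b).symm

lemma pad_Aw (n : ℕ) : pad (Aw n) 1 = 1 := by cases n <;> rfl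
lemma pad_Aw_app (k : ℕ) (r : List Ltr) : pad (Aw (k+1) ++ r) 1 = 1 := rfl
lemma pad_Abar_app (k : ℕ) (r : List Ltr) : pad (Abar (k+1) ++ r) 1 = 0 := rfl

lemma Aw_succ (k : ℕ) : Aw (k+1) = 1 :: 0 :: Aw k := rfl
lemma Abar_succ (k : ℕ) : Abar (k+1) = 0 :: 1 :: Abar k := rfl

lemma Aw_add (a b : ℕ) : Aw (a + b) = Aw a ++ Aw b := by
  induction a with
  | zero => simp [Aw]
  | succ k ih => rw [show k + 1 + b = (k + b) + 1 by omega, Aw_succ, Aw_succ, ih]; rfl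

lemma one_cons_Abar (k : ℕ) : (1 : Ltr) :: Abar k = Bw k := by
  induction k with
  | zero => rfl
  | succ j ih => rw [Abar_succ, Bw, Aw_succ]; simp only [List.cons_append]
                 rw [← Bw, ← ih]

lemma delWord_Aw (n : ℕ) : delWord 0 (Aw n) = 0 := by
  induction n with
  | zero => simp [delWord, Aw]
  | succ k ih =>
      rw [Aw_succ, cons10' (0 :: Aw k) rfl, cons01 (Aw k) (pad_Aw k), ih, mul_zero, mul_zero]

lemma delWord_ezAw (n : ℕ) : delWord 0 (2 :: Aw n) = -wd (Aw n) := by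
  rw [cons21 (Aw n) (pad_Aw n), delWord_Aw, mul_zero, add_zero]

lemma delWord_Aw_app (m : ℕ) (l : List Ltr) :
    delWord 0 (Aw (m+1) ++ 2 :: l) =
      wd (Bw m ++ 2 :: l) + wd (Aw (m+1)) * delWord 0 (2 :: l) := by
  induction m with
  | zero =>
      show delWord 0 (1 :: 0 :: 2 :: l) = _
      rw [cons10' (0 :: 2 :: l) rfl, cons02 (2 :: l) rfl]
      simp only [mul_add, ← mul_assoc, wd_mul, Bw, Aw, List.append_assoc,
        List.cons_append, List.singleton_append, List.nil_append, List.append_nil]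
  | succ k ih =>
      show delWord 0 (1 :: 0 :: (Aw (k+1) ++ 2 :: l)) = _
      rw [cons10' (0 :: (Aw (k+1) ++ 2 :: l)) rfl, cons01 (Aw (k+1) ++ 2 :: l) (pad_Aw_app k _),
        ih]
      simp only [mul_add, ← mul_assoc, wd_mul, Bw, Aw_succ, List.append_assoc,
        List.cons_append, List.singleton_append, List.nil_append, List.append_nil]

lemma delWord_Abar_app (s n : ℕ) :
    delWord 0 (Abar (s+1) ++ 2 :: Aw n) = 0 := by
  induction s with
  | zero =>
      show delWord 0 (0 :: 1 :: 2 :: Aw n) = 0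
      rw [cons01 (1 :: 2 :: Aw n) rfl, cons12 (2 :: Aw n) rfl, delWord_ezAw]
      show wd [0] * (wd [1] * -wd (Aw n) + wd ((1:Ltr) :: Aw n)) = 0
      rw [mul_neg, wd_mul]
      show wd [0] * (-wd ((1:Ltr) :: Aw n) + wd ((1:Ltr) :: Aw n)) = 0
      rw [neg_add_cancel, mul_zero]
  | succ k ih =>
      show delWord 0 (0 :: 1 :: (Abar (k+1) ++ 2 :: Aw n)) = 0
      rw [cons01 (1 :: (Abar (k+1) ++ 2 :: Aw n)) rfl,
        cons10' (Abar (k+1) ++ 2 :: Aw n) (pad_Abar_app k _), ih, mul_zero, mul_zero]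

lemma delWord_ez_Aw_app (s n : ℕ) :
    delWord 0 (2 :: (Aw (s+1) ++ 2 :: Aw n)) =
      -wd (Aw (s+1) ++ 2 :: Aw n) + wd (2 :: (Bw s ++ 2 :: Aw n))
        - wd (2 :: Aw (s+1+n)) := by
  rw [cons21 (Aw (s+1) ++ 2 :: Aw n) (pad_Aw_app s _), delWord_Aw_app, delWord_ezAw]
  simp only [mul_add, mul_neg, ← mul_assoc, wd_mul, List.append_assoc, List.singleton_append, List.nil_append]
  rw [← Aw_add]
  abel

lemma delWord_ez_Abar_app (s n : ℕ) :
    delWord 0 (2 :: (Abar (s+1) ++ 2 :: Aw n)) = -wd (2 :: (Bw s ++ 2 :: Aw n)) := by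
  rw [cons20 (Abar (s+1) ++ 2 :: Aw n) (pad_Abar_app s _), delWord_Abar_app, mul_zero, zero_sub]
  congr 2
  show (2:Ltr) :: (1 :: Abar s ++ 2 :: Aw n) = _
  rw [show (1 : Ltr) :: Abar s ++ 2 :: Aw n = ((1:Ltr) :: Abar s) ++ 2 :: Aw n from rfl,
    one_cons_Abar]

/-- `∂_{z,0}(A_m e_z (A_s + Ā_s) e_z A_n)`, in the cases `m > 0` and `m = 0`. -/
theorem del0_middle (s n : ℕ) (hs : 1 ≤ s) :
    (∀ m : ℕ, 1 ≤ m →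
      del 0 (wd (Aw m ++ ezw ++ Aw s ++ ezw ++ Aw n)
          + wd (Aw m ++ ezw ++ Abar s ++ ezw ++ Aw n)) =
        wd (Bw (m - 1) ++ ezw ++ Aw s ++ ezw ++ Aw n)
          + wd (Bw (m - 1) ++ ezw ++ Abar s ++ ezw ++ Aw n)
          - wd (Aw (s + m) ++ ezw ++ Aw n) - wd (Aw m ++ ezw ++ Aw (s + n))) ∧
    del 0 (wd (ezw ++ Aw s ++ ezw ++ Aw n) + wd (ezw ++ Abar s ++ ezw ++ Aw n)) =
      -wd (Aw s ++ ezw ++ Aw n) - wd (ezw ++ Aw (s + n)) := by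
  obtain ⟨t, rfl⟩ : ∃ t, s = t + 1 := ⟨s - 1, by omega⟩
  constructor
  · intro m hm
    obtain ⟨k, rfl⟩ : ∃ k, m = k + 1 := ⟨m - 1, by omega⟩
    simp only [ezw, List.append_assoc, List.cons_append, List.singleton_append, List.nil_append,
      Nat.add_sub_cancel]
    rw [map_add, del_wd, del_wd, delWord_Aw_app, delWord_Aw_app,
      delWord_ez_Aw_app, delWord_ez_Abar_app]
    rw [show (t+1)+(k+1) = (k+1)+(t+1) by omega, Aw_add (k+1) (t+1)]
    simp only [mul_add, mul_sub, mul_neg, ← mul_assoc, wd_mul, List.append_assoc,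
      List.cons_append, List.singleton_append, List.nil_append]
    abel
  · simp only [ezw, List.append_assoc, List.cons_append, List.singleton_append, List.nil_append]
    rw [map_add, del_wd, del_wd, delWord_ez_Aw_app, delWord_ez_Abar_app]
    abel

end
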